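/- For every λ ≥ 1 and every s ∈ ℝ, C(λs) ≤ λ²·C(s), where C(v) = 2v·arsinh(v/2) − 2√(4 + v²) + 4. -/

import Mathlib

noncomputable def C (v : ℝ) : ℝ :=
  2 * v * Real.arsinh (v / 2) - 2 * Real.sqrt (4 + v ^ 2) + 4

open Real Set

lemma sinh_mul_le (lam : ℝ) (hlam : 1 ≤ lam) {t : ℝ} (ht : 0 ≤ t) :
    lam * Real.sinh t ≤ Real.sinh (lam * t) := by
  have hmono : MonotoneOn (fun u => Real.sinh (lam * u) - lam * Real.sinh u) (Ici 0) := by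
    apply monotoneOn_of_deriv_nonneg (convex_Ici 0)
    · fun_prop
    · intro u hu
      exact (((Real.hasDerivAt_sinh (lam * u)).comp u
        ((hasDerivAt_id u).const_mul lam)).sub
        ((Real.hasDerivAt_sinh u).const_mul lam)).differentiableAt.differentiableWithinAt
    · intro u hu
      rw [interior_Ici] at hu
      have hu0 : 0 < u := hu
      have hd : HasDerivAt (fun u => Real.sinh (lam * u) - lam * Real.sinh u)
          (Real.cosh (lam * u) * (lam * 1) - lam * Real.cosh u) u :=
        (((Real.hasDerivAt_sinh (lam * u)).comp u
          ((hasDerivAt_id u).const_mul lam)).sub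
          ((Real.hasDerivAt_sinh u).const_mul lam))
      rw [hd.deriv]
      have h1 : Real.cosh u ≤ Real.cosh (lam * u) := by
        rw [Real.cosh_le_cosh, abs_of_pos hu0, abs_of_pos (by nlinarith)]
        nlinarith
      nlinarith [Real.cosh_pos u]
  have := hmono (self_mem_Ici) (mem_Ici.mpr ht) ht
  simpa using this

lemma arsinh_mul_le (lam : ℝ) (hlam : 1 ≤ lam) {x : ℝ} (hx : 0 ≤ x) :
    Real.arsinh (lam * x) ≤ lam * Real.arsinh x := by
  rw [← Real.sinh_le_sinh, Real.sinh_arsinh]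
  calc lam * x = lam * Real.sinh (Real.arsinh x) := by rw [Real.sinh_arsinh]
    _ ≤ Real.sinh (lam * Real.arsinh x) :=
        sinh_mul_le lam hlam (Real.arsinh_nonneg_iff.mpr hx)

lemma hasDerivAt_C (v : ℝ) : HasDerivAt C (2 * Real.arsinh (v / 2)) v := by
  have hpos : 0 < 4 + v ^ 2 := by positivity
  have hsq : Real.sqrt (4 + v ^ 2) ≠ 0 := by positivity
  have h1 : HasDerivAt (fun v : ℝ => Real.arsinh (v / 2))
      ((Real.sqrt (1 + (v / 2) ^ 2))⁻¹ • (1 / 2)) v :=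
    ((hasDerivAt_id v).div_const 2).arsinh
  have h2 : HasDerivAt (fun v : ℝ => 2 * v) 2 v := by
    simpa using (hasDerivAt_id v).const_mul 2
  have h3 : HasDerivAt (fun v : ℝ => Real.sqrt (4 + v ^ 2))
      ((2 * v) / (2 * Real.sqrt (4 + v ^ 2))) v := by
    have : HasDerivAt (fun v : ℝ => 4 + v ^ 2) (2 * v) v := by
      simpa using (hasDerivAt_pow 2 v).const_add 4
    exact this.sqrt hpos.ne'
  have hd := ((h2.mul h1).sub (h3.const_mul 2)).add_const 4
  have hsqrtE : Real.sqrt (1 + (v / 2) ^ 2) = Real.sqrt (4 + v ^ 2) / 2 := by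
    have h4 : Real.sqrt 4 = 2 := by
      rw [show (4:ℝ) = 2 ^ 2 by norm_num, Real.sqrt_sq (by norm_num : (0:ℝ) ≤ 2)]
    rw [show (1 + (v / 2) ^ 2) = (4 + v ^ 2) / 4 by ring, Real.sqrt_div' _ (by norm_num), h4]
  rw [hsqrtE] at hd
  have hpos' : 0 < Real.sqrt (4 + v ^ 2) := Real.sqrt_pos.mpr hpos
  refine HasDerivAt.congr_deriv (f := C) hd ?_
  rw [smul_eq_mul]
  field_simp
  ring

lemma C_even (v : ℝ) : C (-v) = C v := by
  simp [C, Real.arsinh_neg, neg_div]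

lemma C_zero : C 0 = 0 := by
  have h4 : Real.sqrt 4 = 2 := by
    rw [show (4:ℝ) = 2 ^ 2 by norm_num, Real.sqrt_sq (by norm_num : (0:ℝ) ≤ 2)]
  simp [C, h4]
  norm_num

lemma c_scaling_nonneg (lam s : ℝ) (hlam : 1 ≤ lam) (hs : 0 ≤ s) :
    C (lam * s) ≤ lam ^ 2 * C s := by
  set f : ℝ → ℝ := fun s => lam ^ 2 * C s - C (lam * s) with hf
  have hderiv : ∀ u : ℝ, HasDerivAt f
      (lam ^ 2 * (2 * Real.arsinh (u / 2)) - 2 * Real.arsinh (lam * u / 2) * lam) u := by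
    intro u
    have hin : HasDerivAt (fun y : ℝ => lam * y) lam u := by
      simpa using (hasDerivAt_id u).const_mul lam
    exact ((hasDerivAt_C u).const_mul (lam ^ 2)).sub
      ((hasDerivAt_C (lam * u)).comp u hin)
  have hmono : MonotoneOn f (Ici 0) := by
    apply monotoneOn_of_deriv_nonneg (convex_Ici 0)
    · exact fun u _ => (hderiv u).differentiableAt.continuousAt.continuousWithinAt
    · intro u _
      exact (hderiv u).differentiableAt.differentiableWithinAt
    · intro u hu
      rw [interior_Ici] at hu
      have hu0 : (0:ℝ) < u := hu
      rw [(hderiv u).deriv]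
      have hkey : Real.arsinh (lam * (u / 2)) ≤ lam * Real.arsinh (u / 2) :=
        arsinh_mul_le lam hlam (by linarith : (0:ℝ) ≤ u / 2)
      rw [show lam * u / 2 = lam * (u / 2) by ring]
      nlinarith
  have h0 : f 0 = 0 := by simp [hf, C_zero]
  have := hmono self_mem_Ici (mem_Ici.mpr hs) hs
  rw [h0] at this
  simp only [hf] at this
  linarith

theorem c_scaling (lam s : ℝ) (hlam : 1 ≤ lam) :
    C (lam * s) ≤ lam ^ 2 * C s := by
  rcases le_or_gt 0 s with hs | hs
  · exact c_scaling_nonneg lam s hlam hs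
  · have := c_scaling_nonneg lam (-s) hlam (by linarith)
    rw [show lam * -s = -(lam * s) by ring, C_even, C_even] at this
    exact this
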